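/- Let a>0, e∈[0,1), e_J∈[0,1), Θ∈ℝ. With the notation of the context, the double average of the quadrupole part of the disturbing-function expansion equals ⟨ M₁/(2ρ) − 3M₂²/(8ρ) ⟩ = −a²(3e² + 2)/(8(1 − e_J²)^{3/2}); in particular it does not depend on Θ. -/

import Mathlib

set_option maxHeartbeats 4000000


open Real intervalIntegral

/-- Planar coordinates of the asteroid in its osculating frame. -/
noncomputable def xPrime (a e E : ℝ) : ℝ := a * (Real.cos E - e)
noncomputable def yPrime (a e E : ℝ) : ℝ := a * Real.sqrt (1 - e ^ 2) * Real.sin E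

/-- Asteroid coordinates rotated by Θ. -/
noncomputable def xA (a e Θ E : ℝ) : ℝ :=
  Real.cos Θ * xPrime a e E - Real.sin Θ * yPrime a e E
noncomputable def yA (a e Θ E : ℝ) : ℝ :=
  Real.sin Θ * xPrime a e E + Real.cos Θ * yPrime a e E

/-- Planet coordinates. -/
noncomputable def xJ (eJ EJ : ℝ) : ℝ := Real.cos EJ - eJ
noncomputable def yJ (eJ EJ : ℝ) : ℝ := Real.sqrt (1 - eJ ^ 2) * Real.sin EJ

/-- Distance from the star to the planet. -/
noncomputable def ρJ (eJ EJ : ℝ) : ℝ := Real.sqrt (xJ eJ EJ ^ 2 + yJ eJ EJ ^ 2)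

noncomputable def M₁ (a e eJ Θ E EJ : ℝ) : ℝ :=
  (xA a e Θ E ^ 2 + yA a e Θ E ^ 2) / ρJ eJ EJ ^ 2

noncomputable def M₂ (a e eJ Θ E EJ : ℝ) : ℝ :=
  -2 * (xA a e Θ E * xJ eJ EJ + yA a e Θ E * yJ eJ EJ) / ρJ eJ EJ ^ 2

/-- Double average over mean anomalies, expressed via eccentric anomalies with Jacobians. -/
noncomputable def davg (e eJ : ℝ) (f : ℝ → ℝ → ℝ) : ℝ :=
  (1 / (4 * Real.pi ^ 2)) *
    ∫ E in (0:ℝ)..(2 * Real.pi), ∫ EJ in (0:ℝ)..(2 * Real.pi),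
      f E EJ * (1 - e * Real.cos E) * (1 - eJ * Real.cos EJ)

lemma F_deriv (q : ℝ) (hq0 : 0 ≤ q) (hq1 : q < 1) (t : ℝ) :
    HasDerivAt (fun u : ℝ => u + 2 * Real.arctan
      (q / (1 + Real.sqrt (1 - q ^ 2)) * Real.sin u /
        (1 - q / (1 + Real.sqrt (1 - q ^ 2)) * Real.cos u)))
      (Real.sqrt (1 - q ^ 2) / (1 - q * Real.cos t)) t := by
  set m := Real.sqrt (1 - q ^ 2) with hmdef
  have hq2 : (0:ℝ) < 1 - q ^ 2 := by nlinarith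
  have hm2 : m ^ 2 = 1 - q ^ 2 := Real.sq_sqrt hq2.le
  have hm0 : 0 < m := Real.sqrt_pos.mpr hq2
  have hm1 : (0:ℝ) < 1 + m := by linarith
  set b := q / (1 + m) with hbdef
  have hb' : b * (1 + m) = q := by rw [hbdef]; field_simp
  have hb0 : 0 ≤ b := div_nonneg hq0 hm1.le
  have hb1 : b < 1 := by
    rw [hbdef, div_lt_one hm1]; nlinarith
  clear_value m b
  have hd : ∀ u : ℝ, 0 < 1 - b * Real.cos u := by
    intro u
    nlinarith [Real.cos_le_one u, Real.neg_one_le_cos u]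
  have hw : 0 < 1 - q * Real.cos t := by
    nlinarith [Real.cos_le_one t, Real.neg_one_le_cos t]
  have hDpos : 0 < 1 - 2 * b * Real.cos t + b ^ 2 := by
    nlinarith [Real.cos_le_one t, Real.neg_one_le_cos t]
  have h1 : HasDerivAt (fun u : ℝ => b * Real.sin u) (b * Real.cos t) t :=
    (Real.hasDerivAt_sin t).const_mul b
  have h2 : HasDerivAt (fun u : ℝ => 1 - b * Real.cos u) (b * Real.sin t) t := by
    have := ((Real.hasDerivAt_cos t).const_mul b).const_sub 1
    simpa using this
  have hu := h1.div h2 (hd t).ne'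
  have harc := (Real.hasDerivAt_arctan (b * Real.sin t / (1 - b * Real.cos t))).comp t hu
  have hF := (hasDerivAt_id t).add (harc.const_mul 2)
  refine HasDerivAt.congr_deriv hF (Eq.symm ?_)
  have hu2 : 1 + (b * Real.sin t / (1 - b * Real.cos t)) ^ 2
      = (1 - 2 * b * Real.cos t + b ^ 2) / (1 - b * Real.cos t) ^ 2 := by
    have hne : ((1 - b*Real.cos t)^2) ≠ 0 := pow_ne_zero _ (hd t).ne'
    rw [div_pow]
    nth_rewrite 1 [← div_self hne]
    rw [← add_div]
    congr 1
    linear_combination (b ^ 2) * Real.sin_sq_add_cos_sq t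
  have hnum : b * Real.cos t * (1 - b * Real.cos t) - b * Real.sin t * (b * Real.sin t)
      = b * Real.cos t - b ^ 2 := by
    linear_combination (-b ^ 2) * Real.sin_sq_add_cos_sq t
  rw [hu2, hnum]
  have hb2 : b ^ 2 * (1 + m) = 1 - m := by
    have h : b ^ 2 * (1 + m) * (1 + m) = (1 - m) * (1 + m) := by
      have hq' : b ^ 2 * (1 + m) ^ 2 = q ^ 2 := by
        linear_combination (b * (1 + m) + q) * hb'
      linear_combination hq' + hm2
    exact mul_right_cancel₀ hm1.ne' h
  have key : (1 - b ^ 2) * (1 - q * Real.cos t)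
      = m * (1 - 2 * b * Real.cos t + b ^ 2) := by
    linear_combination (b * Real.cos t - 1) * hb2 + (Real.cos t * (1 - b ^ 2)) * hb'
  have hsimp : 1 + 2 * (1 / ((1 - 2 * b * Real.cos t + b ^ 2) / (1 - b * Real.cos t) ^ 2) *
      ((b * Real.cos t - b ^ 2) / (1 - b * Real.cos t) ^ 2))
      = (1 - b ^ 2) / (1 - 2 * b * Real.cos t + b ^ 2) := by
    rw [one_div_div, div_mul_div_comm,
      mul_comm ((1 - b * Real.cos t) ^ 2) (b * Real.cos t - b ^ 2),
      mul_div_mul_right _ _ (pow_ne_zero 2 (hd t).ne')]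
    field_simp
    ring
  rw [hsimp, div_eq_div_iff hw.ne' hDpos.ne']
  linear_combination -key

lemma inner_int(X Y q : ℝ) (hq0 : 0 ≤ q) (hq1 : q < 1) :
    ∫ t in (0:ℝ)..(2*Real.pi),
      ((X^2+Y^2)/(2*(1-q*Real.cos t)^2)
        - 3/2*(X*(Real.cos t - q) + Y*(Real.sqrt (1-q^2)*Real.sin t))^2/(1-q*Real.cos t)^4)
      = -(X^2+Y^2)*Real.pi/(2*Real.sqrt (1-q^2)^3) := by
  set m := Real.sqrt (1 - q ^ 2) with hmdef
  have hq2 : (0:ℝ) < 1 - q ^ 2 := by nlinarith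
  have hm2 : m ^ 2 = 1 - q ^ 2 := Real.sq_sqrt hq2.le
  have hm0 : 0 < m := Real.sqrt_pos.mpr hq2
  clear_value m
  have hwpos : ∀ u : ℝ, 0 < 1 - q * Real.cos u := by
    intro u; nlinarith [Real.cos_le_one u, Real.neg_one_le_cos u]
  -- power rewrites
  have hm3 : m ^ 3 = (1 - q ^ 2) * m := by linear_combination m * hm2
  have hm4 : m ^ 4 = (1 - q ^ 2) ^ 2 := by linear_combination (m^2 + 1 - q^2) * hm2
  have hm5 : m ^ 5 = (1 - q ^ 2) ^ 2 * m := by linear_combination (m^3 + (1-q^2)*m) * hm2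
  have hm6 : m ^ 6 = (1 - q ^ 2) ^ 3 := by
    linear_combination (m^4 + (1-q^2)*m^2 + (1-q^2)^2) * hm2
  have hm7 : m ^ 7 = (1 - q ^ 2) ^ 3 * m := by
    linear_combination (m^5 + (1-q^2)*m^3 + (1-q^2)^2*m) * hm2
  have hm8 : m ^ 8 = (1 - q ^ 2) ^ 4 := by
    linear_combination (m^6 + (1-q^2)*m^4 + (1-q^2)^2*m^2 + (1-q^2)^3) * hm2
  -- the antiderivative
  set P : ℝ → ℝ := fun u =>
    Real.sin u * (X^2*((q/4 - q^3/2) + (-3/4 + 5*q^2/4)*Real.cos u + (q/4 - q^3/2)*Real.cos u^2)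
      + Y^2*((-3*q/4 + q^3/2) + (3/4 - q^2/4)*Real.cos u + (-q/4)*Real.cos u^2)) / m^2
    + X*Y*m*(3*Real.cos u^2 - q*Real.cos u^3 - 2)/2 with hPdef
  set H : ℝ → ℝ := fun u =>
    -(X^2+Y^2)/(4*m^3) * (u + 2 * Real.arctan (q/(1+m) * Real.sin u / (1 - q/(1+m) * Real.cos u)))
    + P u / (1 - q*Real.cos u)^3 with hHdef
  have hFd : ∀ s : ℝ, HasDerivAt
      (fun u : ℝ => u + 2 * Real.arctan (q/(1+m) * Real.sin u / (1 - q/(1+m) * Real.cos u)))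
      (m/(1 - q*Real.cos s)) s := by
    intro s; rw [hmdef]; exact F_deriv q hq0 hq1 s
  have hderiv : ∀ t : ℝ, HasDerivAt H
      ((X^2+Y^2)/(2*(1-q*Real.cos t)^2)
        - 3/2*(X*(Real.cos t - q) + Y*(m*Real.sin t))^2/(1-q*Real.cos t)^4) t := by
    intro t
    have hw := hwpos t
    have hs2 : Real.sin t ^ 2 = 1 - Real.cos t ^ 2 := by
      linear_combination Real.sin_sq_add_cos_sq t
    have hs3 : Real.sin t ^ 3 = (1 - Real.cos t ^ 2) * Real.sin t := by
      linear_combination Real.sin t * hs2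
    have hs4 : Real.sin t ^ 4 = (1 - Real.cos t ^ 2) ^ 2 := by
      linear_combination (Real.sin t^2 + 1 - Real.cos t^2) * hs2
    have hs5 : Real.sin t ^ 5 = (1 - Real.cos t ^ 2) ^ 2 * Real.sin t := by
      linear_combination (Real.sin t^3 + (1 - Real.cos t^2)*Real.sin t) * hs2
    have hs6 : Real.sin t ^ 6 = (1 - Real.cos t ^ 2) ^ 3 := by
      linear_combination (Real.sin t^4 + (1-Real.cos t^2)*Real.sin t^2 + (1-Real.cos t^2)^2) * hs2
    have hA1 : HasDerivAt (fun u : ℝ =>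
        (q/4 - q^3/2) + (-3/4 + 5*q^2/4)*Real.cos u + (q/4 - q^3/2)*Real.cos u^2)
        ((-3/4 + 5*q^2/4)*(-Real.sin t) + (q/4 - q^3/2)*(2*Real.cos t^(2-1)*(-Real.sin t))) t := by
      exact (((Real.hasDerivAt_cos t).const_mul _).const_add _).add
        (((Real.hasDerivAt_cos t).pow 2).const_mul _)
    have hA2 : HasDerivAt (fun u : ℝ =>
        (-3*q/4 + q^3/2) + (3/4 - q^2/4)*Real.cos u + (-q/4)*Real.cos u^2)
        ((3/4 - q^2/4)*(-Real.sin t) + (-q/4)*(2*Real.cos t^(2-1)*(-Real.sin t))) t :=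
      (((Real.hasDerivAt_cos t).const_mul _).const_add _).add
        (((Real.hasDerivAt_cos t).pow 2).const_mul _)
    have hA : HasDerivAt (fun u : ℝ =>
        X^2*((q/4 - q^3/2) + (-3/4 + 5*q^2/4)*Real.cos u + (q/4 - q^3/2)*Real.cos u^2)
        + Y^2*((-3*q/4 + q^3/2) + (3/4 - q^2/4)*Real.cos u + (-q/4)*Real.cos u^2))
        (X^2*((-3/4 + 5*q^2/4)*(-Real.sin t) + (q/4 - q^3/2)*(2*Real.cos t^(2-1)*(-Real.sin t)))
        + Y^2*((3/4 - q^2/4)*(-Real.sin t) + (-q/4)*(2*Real.cos t^(2-1)*(-Real.sin t)))) t :=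
      (hA1.const_mul _).add (hA2.const_mul _)
    have hK : HasDerivAt (fun u : ℝ => X*Y*m*(3*Real.cos u^2 - q*Real.cos u^3 - 2)/2)
        (X*Y*m*(3*(2*Real.cos t^(2-1)*(-Real.sin t)) - q*(3*Real.cos t^(3-1)*(-Real.sin t)))/2) t := by
      exact ((((((Real.hasDerivAt_cos t).pow 2).const_mul 3).sub
        (((Real.hasDerivAt_cos t).pow 3).const_mul q)).sub_const 2).const_mul (X*Y*m)).div_const 2
    have hPnum : HasDerivAt P
        ((Real.cos t * (X^2*((q/4 - q^3/2) + (-3/4 + 5*q^2/4)*Real.cos t + (q/4 - q^3/2)*Real.cos t^2)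
          + Y^2*((-3*q/4 + q^3/2) + (3/4 - q^2/4)*Real.cos t + (-q/4)*Real.cos t^2))
          + Real.sin t * (X^2*((-3/4 + 5*q^2/4)*(-Real.sin t) + (q/4 - q^3/2)*(2*Real.cos t^(2-1)*(-Real.sin t)))
          + Y^2*((3/4 - q^2/4)*(-Real.sin t) + (-q/4)*(2*Real.cos t^(2-1)*(-Real.sin t))))) / m^2
        + X*Y*m*(3*(2*Real.cos t^(2-1)*(-Real.sin t)) - q*(3*Real.cos t^(3-1)*(-Real.sin t)))/2) t := by
      exact (((Real.hasDerivAt_sin t).mul hA).div_const (m^2)).add hK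
    have hwd : HasDerivAt (fun u : ℝ => 1 - q*Real.cos u) (q*Real.sin t) t := by
      simpa using ((Real.hasDerivAt_cos t).const_mul q).const_sub 1
    have hw3 := hwd.pow 3
    have hN := hPnum.div hw3 (pow_ne_zero 3 hw.ne')
    have hHd := ((hFd t).const_mul (-(X^2+Y^2)/(4*m^3))).add hN
    refine HasDerivAt.congr_deriv hHd (Eq.symm ?_)
    simp only [hPdef]
    norm_num
    field_simp
    ring_nf
    simp only [hm2,hm3,hm4,hm5,hm6,hm7,hm8,hs2,hs3,hs4,hs5,hs6]
    ring
  have hcont : Continuous (fun t : ℝ => (X^2+Y^2)/(2*(1-q*Real.cos t)^2)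
      - 3/2*(X*(Real.cos t - q) + Y*(m*Real.sin t))^2/(1-q*Real.cos t)^4) := by
    apply Continuous.sub
    · exact continuous_const.div (by continuity) (fun x => by have := hwpos x; positivity)
    · exact Continuous.div (by continuity) (by continuity) (fun x => by have := hwpos x; positivity)
  rw [integral_eq_sub_of_hasDerivAt (fun t _ => hderiv t)
    (hcont.intervalIntegrable 0 (2*Real.pi))]
  rw [hHdef]
  simp only [hPdef, Real.cos_two_pi, Real.sin_two_pi, Real.cos_zero, Real.sin_zero]
  have h1q : (1:ℝ) - q ≠ 0 := by linarith
  norm_num [Real.arctan_zero]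
  field_simp
  ring

lemma outer_int (e : ℝ) : ∫ t in (0:ℝ)..(2*Real.pi), (1-e*Real.cos t)^3
    = Real.pi*(2+3*e^2) := by
  set G : ℝ → ℝ := fun u => u - 3*e*Real.sin u + 3*e^2*(u/2 + Real.sin u*Real.cos u/2)
    - e^3*(Real.sin u - Real.sin u^3/3) with hGdef
  have hderiv : ∀ t : ℝ, HasDerivAt G ((1-e*Real.cos t)^3) t := by
    intro t
    have hs2 : Real.sin t ^ 2 = 1 - Real.cos t ^ 2 := by
      linear_combination Real.sin_sq_add_cos_sq t
    have h1 := (hasDerivAt_id t).sub ((Real.hasDerivAt_sin t).const_mul (3*e))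
    have h2 := (((hasDerivAt_id t).div_const 2).add
      (((Real.hasDerivAt_sin t).mul (Real.hasDerivAt_cos t)).div_const 2)).const_mul (3*e^2)
    have h3 := (((Real.hasDerivAt_sin t).sub
      (((Real.hasDerivAt_sin t).pow 3).div_const 3)).const_mul (e^3))
    have hG := (h1.add h2).sub h3
    refine HasDerivAt.congr_deriv hG ?_
    norm_num
    ring_nf
    simp only [hs2]
    ring
  rw [integral_eq_sub_of_hasDerivAt (fun t _ => hderiv t)
    ((by continuity : Continuous fun t : ℝ => (1-e*Real.cos t)^3).intervalIntegrable 0 (2*Real.pi))]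
  rw [hGdef]
  simp [Real.cos_two_pi, Real.sin_two_pi]
  ring

theorem doubleAveraged_quadrupole_term
    (a e eJ Θ : ℝ) (ha : 0 < a) (he0 : 0 ≤ e) (he1 : e < 1)
    (heJ0 : 0 ≤ eJ) (heJ1 : eJ < 1) :
    davg e eJ (fun E EJ =>
      M₁ a e eJ Θ E EJ / (2 * ρJ eJ EJ) - 3 * M₂ a e eJ Θ E EJ ^ 2 / (8 * ρJ eJ EJ))
    = -a ^ 2 * (3 * e ^ 2 + 2) / (8 * (1 - eJ ^ 2) ^ ((3:ℝ) / 2)) := by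
  have hq2 : (0:ℝ) < 1 - eJ ^ 2 := by nlinarith
  have hK0 : 0 < Real.sqrt (1 - eJ ^ 2) := Real.sqrt_pos.mpr hq2
  have hKsq : Real.sqrt (1 - eJ ^ 2) ^ 2 = 1 - eJ ^ 2 := Real.sq_sqrt hq2.le
  have he2 : (0:ℝ) ≤ 1 - e ^ 2 := by nlinarith
  have hesq : Real.sqrt (1 - e ^ 2) ^ 2 = 1 - e ^ 2 := Real.sq_sqrt he2
  have hwJ : ∀ u : ℝ, 0 < 1 - eJ * Real.cos u := by
    intro u; nlinarith [Real.cos_le_one u, Real.neg_one_le_cos u]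
  have hρ : ∀ EJ : ℝ, ρJ eJ EJ = 1 - eJ * Real.cos EJ := by
    intro EJ
    have hsE : Real.sin EJ ^ 2 = 1 - Real.cos EJ ^ 2 := by
      linear_combination Real.sin_sq_add_cos_sq EJ
    rw [ρJ, xJ, yJ]
    rw [show (Real.cos EJ - eJ)^2 + (Real.sqrt (1-eJ^2)*Real.sin EJ)^2
        = (1 - eJ*Real.cos EJ)^2 from by
      linear_combination (Real.sin EJ^2)*hKsq + (1-eJ^2)*hsE]
    exact Real.sqrt_sq (hwJ EJ).le
  have hXY : ∀ E : ℝ, xA a e Θ E ^ 2 + yA a e Θ E ^ 2 = a^2*(1-e*Real.cos E)^2 := by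
    intro E
    have hsE : Real.sin E ^ 2 = 1 - Real.cos E ^ 2 := by
      linear_combination Real.sin_sq_add_cos_sq E
    have hsT : Real.sin Θ ^ 2 = 1 - Real.cos Θ ^ 2 := by
      linear_combination Real.sin_sq_add_cos_sq Θ
    rw [xA, yA, xPrime, yPrime]
    ring_nf
    simp only [hsE, hsT, hesq]
    ring
  rw [davg]
  rw [intervalIntegral.integral_congr
    (g := fun E : ℝ => -(a^2*Real.pi/(2*Real.sqrt (1-eJ^2)^3))*(1-e*Real.cos E)^3) ?_]
  · rw [intervalIntegral.integral_const_mul, outer_int]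
    have hc : Real.sqrt (1-eJ^2)^3 = (1-eJ^2)^((3:ℝ)/2) := by
      rw [Real.sqrt_eq_rpow, ← Real.rpow_natCast ((1-eJ^2)^((1:ℝ)/2)) 3,
        ← Real.rpow_mul hq2.le]
      norm_num
    rw [hc]
    have hrp : (0:ℝ) < (1-eJ^2)^((3:ℝ)/2) := Real.rpow_pos_of_pos hq2 _
    have hpi := Real.pi_pos
    field_simp
    ring
  · intro E _
    simp only
    rw [intervalIntegral.integral_congr
      (g := fun EJ : ℝ => (1-e*Real.cos E) *
        ((xA a e Θ E^2 + yA a e Θ E^2)/(2*(1-eJ*Real.cos EJ)^2)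
          - 3/2*(xA a e Θ E*(Real.cos EJ - eJ)
            + yA a e Θ E*(Real.sqrt (1-eJ^2)*Real.sin EJ))^2/(1-eJ*Real.cos EJ)^4)) ?_]
    · rw [intervalIntegral.integral_const_mul,
        inner_int (xA a e Θ E) (yA a e Θ E) eJ heJ0 heJ1, hXY E]
      ring
    · intro EJ _
      simp only [M₁, M₂, hρ EJ, xJ, yJ]
      have hw := hwJ EJ
      field_simp
      ring
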